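/- arXiv:0907.0615 — 4 statements merged into one kernel-verified Lean document; each statement's English description precedes it below -/
import Mathlib

section
/- Let μ : Σ → Σ* be a morphism on a finite alphabet Σ and let Ψ ⊆ Σ. Then there exists an integer T ≥ 1 such that the morphism φ = μ^T satisfies: (a) if a letter a is (φ,Ψ)-moribund, then φⁿ(a) ∈ Ψ* for all n > 0 and a ∈ Σ∖Ψ; (b) if a letter a is (φ,Ψ)-robust, then the word φⁿ(a) contains at least one letter of Σ∖Ψ for all n > 0. -/
/-- Application of a morphism (letter-to-word map) to a word. -/
def applyMorphism {σ : Type*} (μ : σ → List σ) (w : List σ) : List σ :=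
  (w.map μ).flatten

/-- `morphIter μ n a` is the word `μ^n(a)`. -/
def morphIter {σ : Type*} (μ : σ → List σ) (n : ℕ) (a : σ) : List σ :=
  (applyMorphism μ)^[n] [a]

/-- The `T`-th power of the morphism `μ` (as a letter-to-word map). -/
def morphPow {σ : Type*} (μ : σ → List σ) (T : ℕ) : σ → List σ :=
  fun c => morphIter μ T c

/-- `a` is `(μ,Ψ)`-dead: `μ^n(a) ∈ Ψ*` for every `n ≥ 0`. -/
def IsDead {σ : Type*} (μ : σ → List σ) (Ψ : Set σ) (a : σ) : Prop :=
  ∀ n, ∀ c ∈ morphIter μ n a, c ∈ Ψ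

/-- `a` is `(μ,Ψ)`-moribund: some `μ^m(a)` contains a letter of `Σ∖Ψ`, and
`μ^n(a) ∈ Ψ*` for every `n > m`. -/
def IsMoribund {σ : Type*} (μ : σ → List σ) (Ψ : Set σ) (a : σ) : Prop :=
  ∃ m, (∃ c ∈ morphIter μ m a, c ∉ Ψ) ∧ ∀ n, m < n → ∀ c ∈ morphIter μ n a, c ∈ Ψ

/-- `a` is `(μ,Ψ)`-robust: `μ^n(a)` contains a letter of `Σ∖Ψ` for infinitely many `n`. -/
def IsRobust {σ : Type*} (μ : σ → List σ) (Ψ : Set σ) (a : σ) : Prop :=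
  ∀ N, ∃ n, N ≤ n ∧ ∃ c ∈ morphIter μ n a, c ∉ Ψ


lemma applyMorphism_append {σ : Type*} (μ : σ → List σ) (w₁ w₂ : List σ) :
    applyMorphism μ (w₁ ++ w₂) = applyMorphism μ w₁ ++ applyMorphism μ w₂ := by
  simp [applyMorphism]

lemma iterate_applyMorphism_append {σ : Type*} (μ : σ → List σ) (k : ℕ) (w₁ w₂ : List σ) :
    (applyMorphism μ)^[k] (w₁ ++ w₂) = (applyMorphism μ)^[k] w₁ ++ (applyMorphism μ)^[k] w₂ := by
  induction k generalizing w₁ w₂ with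
  | zero => simp
  | succ k ih => simp [Function.iterate_succ_apply, applyMorphism_append, ih]

lemma iterate_applyMorphism_nil {σ : Type*} (μ : σ → List σ) (k : ℕ) :
    (applyMorphism μ)^[k] ([] : List σ) = [] := by
  induction k with
  | zero => rfl
  | succ k ih => simp [Function.iterate_succ_apply, applyMorphism, ih]

lemma iterate_eq_applyMorphism_pow {σ : Type*} (μ : σ → List σ) (T : ℕ) (w : List σ) :
    (applyMorphism μ)^[T] w = applyMorphism (morphPow μ T) w := by
  induction w with
  | nil => simp [applyMorphism, iterate_applyMorphism_nil]
  | cons a w ih =>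
    have h : (a :: w) = [a] ++ w := rfl
    rw [h, iterate_applyMorphism_append, ih, applyMorphism_append]
    congr 1
    simp [applyMorphism, morphPow, morphIter]

lemma morphIter_morphPow {σ : Type*} (μ : σ → List σ) (T n : ℕ) (a : σ) :
    morphIter (morphPow μ T) n a = morphIter μ (T * n) a := by
  have hfun : applyMorphism (morphPow μ T) = (applyMorphism μ)^[T] := by
    funext w; exact (iterate_eq_applyMorphism_pow μ T w).symm
  simp only [morphIter, hfun, Function.iterate_mul]

lemma mem_morphIter_succ {σ : Type*} (μ : σ → List σ) (n : ℕ) (a c : σ) :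
    c ∈ morphIter μ (n + 1) a ↔ ∃ b ∈ μ a, c ∈ morphIter μ n b := by
  have h1 : morphIter μ (n + 1) a = (applyMorphism μ)^[n] (μ a) := by
    simp [morphIter, Function.iterate_succ_apply, applyMorphism]
  rw [h1, iterate_eq_applyMorphism_pow]
  simp only [applyMorphism, List.mem_flatten, List.mem_map]
  constructor
  · rintro ⟨l, ⟨b, hb, rfl⟩, hc⟩; exact ⟨b, hb, hc⟩
  · rintro ⟨b, hb, hc⟩; exact ⟨morphPow μ n b, ⟨b, hb, rfl⟩, hc⟩

/-- Lemma 7.7.3 of Allouche–Shallit. For every morphism `μ` on a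
finite alphabet `Σ` and every `Ψ ⊆ Σ`, there is `T ≥ 1` such that `φ = μ^T` satisfies:
(a) if `a` is `(φ,Ψ)`-moribund then `φ^n(a) ∈ Ψ*` for all `n > 0` and `a ∈ Σ∖Ψ`;
(b) if `a` is `(φ,Ψ)`-robust then `φ^n(a)` contains a letter of `Σ∖Ψ` for all `n > 0`. -/
theorem stmt_8 {σ : Type*} [Fintype σ] (μ : σ → List σ) (Ψ : Set σ) :
    ∃ T, 1 ≤ T ∧
      (∀ a, IsMoribund (morphPow μ T) Ψ a →
        (∀ n, 0 < n → ∀ c ∈ morphIter (morphPow μ T) n a, c ∈ Ψ) ∧ a ∉ Ψ) ∧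
      (∀ a, IsRobust (morphPow μ T) Ψ a →
        ∀ n, 0 < n → ∃ c ∈ morphIter (morphPow μ T) n a, c ∉ Ψ) := by
  classical
  -- `U n` : the set of letters whose n-th iterate contains a letter outside Ψ
  set G : Set σ → Set σ := fun U => {a | ∃ b ∈ μ a, b ∈ U} with hG
  set U : ℕ → Set σ := fun n => G^[n] {a | a ∉ Ψ} with hU
  have hUmem : ∀ n a, a ∈ U n ↔ ∃ c ∈ morphIter μ n a, c ∉ Ψ := by
    intro n
    induction n with
    | zero =>
      intro a
      simp [hU, morphIter]
    | succ n ih =>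
      intro a
      have : U (n + 1) = G (U n) := by
        simp only [hU, Function.iterate_succ_apply']
      rw [this]
      constructor
      · rintro ⟨b, hb, hbU⟩
        obtain ⟨c, hc, hcΨ⟩ := (ih b).1 hbU
        exact ⟨c, (mem_morphIter_succ μ n a c).2 ⟨b, hb, hc⟩, hcΨ⟩
      · rintro ⟨c, hc, hcΨ⟩
        obtain ⟨b, hb, hc'⟩ := (mem_morphIter_succ μ n a c).1 hc
        exact ⟨b, hb, (ih b).2 ⟨c, hc', hcΨ⟩⟩
  -- pigeonhole: the sequence U is eventually periodic
  obtain ⟨m, n, hmn, heq⟩ := Finite.exists_ne_map_eq_of_infinite (fun n : ℕ => U n)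
  -- wlog m < n
  obtain ⟨s, p, hp, hsp⟩ : ∃ s p, 1 ≤ p ∧ U (s + p) = U s := by
    rcases lt_or_gt_of_ne hmn with h | h
    · exact ⟨m, n - m, by omega, by rw [show m + (n - m) = n by omega]; exact heq.symm⟩
    · exact ⟨n, m - n, by omega, by rw [show n + (m - n) = m by omega]; exact heq⟩
  have hper : ∀ k, s ≤ k → U (k + p) = U k := by
    intro k hk
    obtain ⟨j, rfl⟩ := Nat.exists_eq_add_of_le hk
    have h1 : U (s + j + p) = G^[j] (U (s + p)) := by
      simp only [hU, show s + j + p = j + (s + p) by omega, Function.iterate_add_apply]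
    have h2 : U (s + j) = G^[j] (U s) := by
      simp only [hU, show s + j = j + s by omega, Function.iterate_add_apply]
    rw [h1, h2, hsp]
  have hperj : ∀ j k, s ≤ k → U (k + j * p) = U k := by
    intro j
    induction j with
    | zero => simp
    | succ j ih =>
      intro k hk
      have : k + (j + 1) * p = (k + j * p) + p := by ring
      rw [this, hper _ (by omega), ih k hk]
  refine ⟨p * (s + 1), Nat.one_le_iff_ne_zero.mpr (by positivity), ?_, ?_⟩
  all_goals
    set T := p * (s + 1) with hT
    have hTs : s ≤ T := by calc s ≤ s + 1 := by omega
                                _ ≤ p * (s + 1) := Nat.le_mul_of_pos_left _ hp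
    have hUT : ∀ k, 1 ≤ k → U (T * k) = U T := by
      intro k hk
      obtain ⟨j, rfl⟩ := Nat.exists_eq_add_of_le hk
      have : T * (1 + j) = T + ((s + 1) * j) * p := by rw [hT]; ring
      rw [this, hperj _ _ hTs]
  · -- moribund case
    intro a ⟨m, hm, hmor⟩
    have hm' : a ∈ U (T * m) := by
      rw [hUmem]
      obtain ⟨c, hc, hcΨ⟩ := hm
      rw [morphIter_morphPow] at hc
      exact ⟨c, hc, hcΨ⟩
    have hm0 : m = 0 := by
      by_contra h
      have h1 : a ∈ U (T * (m + 1)) := by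
        rw [hUT (m + 1) (by omega), ← hUT m (by omega)]; exact hm'
      rw [hUmem] at h1
      obtain ⟨c, hc, hcΨ⟩ := h1
      rw [← morphIter_morphPow] at hc
      exact hcΨ (hmor (m + 1) (by omega) c hc)
    constructor
    · intro n hn c hc
      by_contra hcΨ
      exact hcΨ (hmor n (by omega) c hc)
    · subst hm0
      obtain ⟨c, hc, hcΨ⟩ := hm
      simp only [morphIter, Function.iterate_zero, id_eq, List.mem_singleton] at hc
      subst hc; exact hcΨ
  · -- robust case
    intro a hrob n hn
    obtain ⟨k, hk, c, hc, hcΨ⟩ := hrob 1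
    rw [morphIter_morphPow]
    have h1 : a ∈ U (T * k) := by
      rw [hUmem]
      rw [morphIter_morphPow] at hc
      exact ⟨c, hc, hcΨ⟩
    have h2 : a ∈ U (T * n) := by
      rw [hUT n hn, ← hUT k hk]; exact h1
    rw [hUmem] at h2
    exact h2
end

section
/- Let μ : Σ → B₂(Σ) be a 2-dimensional morphism prolongable on a with shape-symmetric fixed point y = μ^ω(a). Let μ₁ be the unidimensional morphism obtained by taking the first row of the μ-image of each letter occurring in the first row of y, and μ₂ the unidimensional morphism obtained by taking the first column of the μ-image of each letter occurring in the first column of y; both are prolongable on a with infinite fixed points the first row, respectively the first column, of y. Then the directive languages L_{μ₁,a} and L_{μ₂,a} are equal. -/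
/-- A bounded 2-dimensional picture over `σ`: a shape `(width, height)` together with
its entries (entries outside the domain `[0,width) × [0,height)` are irrelevant). -/
structure Picture (σ : Type*) where
  width : ℕ
  height : ℕ
  entry : ℕ → ℕ → σ

/-- `y : ℕ × ℕ → σ` is the 2-dimensional infinite fixed point `μ^ω(a)` of the
2-dimensional morphism `μ`, prolongable on `a`.  This packages: prolongability
(`(μ a)(0,0) = a`, `y(0,0) = a`); the coherence conditions making the application of
`μ` to `y` well defined (images of letters in a common column of `y` have equal widths,
images of letters in a common row have equal heights, and all images occurring in `y`
are nonempty); and the fixed-point equation `μ(y) = y`, expressed via the sequences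
`col`, `row` of boundary coordinates of the blocks `μ(y(m,n))`. -/
def IsFixedPoint2D {σ : Type*} (μ : σ → Picture σ) (a : σ) (y : ℕ × ℕ → σ) : Prop :=
  y (0, 0) = a ∧ (μ a).entry 0 0 = a ∧
  (∀ m n, 1 ≤ (μ (y (m, n))).width ∧ 1 ≤ (μ (y (m, n))).height) ∧
  (∀ m n n', (μ (y (m, n))).width = (μ (y (m, n'))).width) ∧
  (∀ m m' n, (μ (y (m, n))).height = (μ (y (m', n))).height) ∧
  ∃ col row : ℕ → ℕ,
    col 0 = 0 ∧ row 0 = 0 ∧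
    (∀ m, col (m + 1) = col m + (μ (y (m, 0))).width) ∧
    (∀ n, row (n + 1) = row n + (μ (y (0, n))).height) ∧
    (∀ m n i j, i < (μ (y (m, n))).width → j < (μ (y (m, n))).height →
      y (col m + i, row n + j) = (μ (y (m, n))).entry i j)

/-- The fixed point `y` of `μ` is shape-symmetric: if the shape of `μ(y(m,n))` is
`(s,t)` then the shape of `μ(y(n,m))` is `(t,s)`. -/
def ShapeSymmetric {σ : Type*} (μ : σ → Picture σ) (y : ℕ × ℕ → σ) : Prop :=
  ∀ m n, (μ (y (m, n))).width = (μ (y (n, m))).height ∧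
         (μ (y (m, n))).height = (μ (y (n, m))).width

/-- The unidimensional morphism obtained from the first rows of the `μ`-images. -/
def firstRow {σ : Type*} (μ : σ → Picture σ) (b : σ) : List σ :=
  List.ofFn (fun i : Fin (μ b).width => (μ b).entry i.1 0)

/-- The unidimensional morphism obtained from the first columns of the `μ`-images. -/
def firstCol {σ : Type*} (μ : σ → Picture σ) (b : σ) : List σ :=
  List.ofFn (fun j : Fin (μ b).height => (μ b).entry 0 j.1)

/-- The (partial) transition function `δ_ν` of the automaton `𝒜_{ν,a}` of a
unidimensional morphism `ν`, extended to words of digits. -/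
def deltaW {σ : Type*} (ν : σ → List σ) (b : σ) (w : List ℕ) : Option σ :=
  List.foldlM (fun s i => (ν s)[i]?) b w

/-- The directive language `L_{ν,a}`: the words accepted by `𝒜_{ν,a}` (all states are
final, so acceptance means the run is defined) which do not have `0` as a prefix. -/
def directive {σ : Type*} (ν : σ → List σ) (a : σ) : Set (List ℕ) :=
  {w | (deltaW ν a w).isSome = true ∧ w.head? ≠ some 0}

/-- Genealogical (radix, shortlex) order on words of digits. -/
def GenLtN (u v : List ℕ) : Prop :=
  u.length < v.length ∨ (u.length = v.length ∧ List.Lex (· < ·) u v)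

/-- `rep` is the genealogical enumeration of the language `L`. -/
def IsANSEnum (L : Set (List ℕ)) (rep : ℕ → List ℕ) : Prop :=
  (∀ n, rep n ∈ L) ∧ (∀ w ∈ L, ∃ n, rep n = w) ∧
  (∀ m n, m < n → GenLtN (rep m) (rep n))

/-- Let `μ` be a 2-dimensional morphism prolongable on `a` with
shape-symmetric fixed point `y = μ^ω(a)`. Let `μ₁` (resp. `μ₂`) be the unidimensional
morphism obtained by taking the first row (resp. first column) of the `μ`-image of each
letter. Then the directive languages `L_{μ₁,a}` and `L_{μ₂,a}` are equal. -/
theorem stmt_11 {σ : Type*} (μ : σ → Picture σ) (a : σ) (y : ℕ × ℕ → σ)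
    (hfp : IsFixedPoint2D μ a y) (hss : ShapeSymmetric μ y) :
    directive (firstRow μ) a = directive (firstCol μ) a := by
  obtain ⟨hy00, -, hpos, -, -, col, row, hcol0, hrow0, hcolS, hrowS, hfix⟩ := hfp
  have hcr : ∀ m, col m = row m := by
    intro m; induction m with
    | zero => rw [hcol0, hrow0]
    | succ m ih => rw [hcolS, hrowS, ih, (hss m 0).1]
  have hr : ∀ (ν : σ → List σ) (b : σ) (w : List ℕ) (i : ℕ),
      deltaW ν b (w ++ [i]) = (deltaW ν b w).bind fun s => (ν s)[i]? := by
    intro ν b w i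
    simp [deltaW, List.foldlM_append]
  have key : ∀ w : List ℕ,
      (deltaW (firstRow μ) a w = none ∧ deltaW (firstCol μ) a w = none) ∨
      ∃ m, deltaW (firstRow μ) a w = some (y (m, 0)) ∧
           deltaW (firstCol μ) a w = some (y (0, m)) := by
    intro w
    induction w using List.reverseRecOn with
    | nil => exact Or.inr ⟨0, by rw [hy00]; rfl, by rw [hy00]; rfl⟩
    | append_singleton w i ih =>
      rcases ih with ⟨h1, h2⟩ | ⟨m, h1, h2⟩
      · left; simp [hr, h1, h2]
      · by_cases hi : i < (μ (y (m, 0))).width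
        · have hi' : i < (μ (y (0, m))).height := by rw [← (hss m 0).1]; exact hi
          right
          refine ⟨col m + i, ?_, ?_⟩
          · rw [hr, h1, Option.bind_some]
            have hget : (firstRow μ (y (m, 0)))[i]? = some ((μ (y (m, 0))).entry i 0) := by
              simp [firstRow, List.getElem?_ofFn, List.ofFnNthVal, hi]
            rw [hget]
            have hy := hfix m 0 i 0 hi (hpos m 0).2
            rw [hrow0] at hy
            simp only [Nat.add_zero] at hy
            rw [← hy]
          · rw [hr, h2, Option.bind_some]
            have hget : (firstCol μ (y (0, m)))[i]? = some ((μ (y (0, m))).entry 0 i) := by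
              simp [firstCol, List.getElem?_ofFn, List.ofFnNthVal, hi']
            rw [hget]
            have hy := hfix 0 m 0 i (hpos 0 m).1 hi'
            rw [hcol0] at hy
            simp only [Nat.add_zero, Nat.zero_add] at hy
            rw [← hy, hcr m]
        · have hi' : ¬ i < (μ (y (0, m))).height := by rw [← (hss m 0).1]; exact hi
          left
          constructor
          · rw [hr, h1, Option.bind_some]
            simp [firstRow, List.getElem?_ofFn, List.ofFnNthVal, hi]
          · rw [hr, h2, Option.bind_some]
            simp [firstCol, List.getElem?_ofFn, List.ofFnNthVal, hi']
  ext w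
  simp only [directive, Set.mem_setOf_eq]
  rcases key w with ⟨h1, h2⟩ | ⟨m, h1, h2⟩ <;> simp [h1, h2]
end

section
/- Let μ : Σ → B₂(Σ) be a 2-dimensional morphism prolongable on a with shape-symmetric fixed point y = μ^ω(a). Let L denote the common directive language L_{μ₁,a} = L_{μ₂,a} of the unidimensional morphisms μ₁, μ₂ derived from the first row and first column of y, and let S be the abstract numeration system built on L with digits ordered 0 < 1 < ⋯. Then for all m,n ≥ 0 whose S-representations are nonempty, writing rep_S(m) = u·b and rep_S(n) = v·c with b,c single digits, one has (μ(y(val_S(u), val_S(v))))(b,c) = y(m,n), where (μ(σ))(b,c) denotes the entry of the picture μ(σ) at position (b,c). -/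
section helpers

lemma deltaW_cons {σ : Type*} (ν : σ → List σ) (b : σ) (h : ℕ) (t : List ℕ) :
    deltaW ν b (h :: t) = ((ν b)[h]?).bind (fun s => deltaW ν s t) := by
  simp [deltaW, List.foldlM_cons, Option.bind]

lemma deltaW_snoc {σ : Type*} (ν : σ → List σ) (b : σ) (u : List ℕ) (d : ℕ) :
    deltaW ν b (u ++ [d]) = (deltaW ν b u).bind (fun s => (ν s)[d]?) := by
  induction u generalizing b with
  | nil => simp [deltaW]
  | cons h t ih =>
    rw [List.cons_append, deltaW_cons, deltaW_cons]
    cases (ν b)[h]? with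
    | none => simp
    | some s => simp [ih]

lemma snoc_inj {u v : List ℕ} {b c : ℕ} (h : u ++ [b] = v ++ [c]) : u = v ∧ b = c := by
  obtain ⟨h1, h2⟩ := List.append_inj' h rfl
  exact ⟨h1, by simpa using h2⟩

lemma lex_asymm {u v : List ℕ} (h1 : List.Lex (·<·) u v) (h2 : List.Lex (·<·) v u) : False := by
  induction h1 with
  | nil => cases h2
  | rel h => cases h2 with
    | rel h' => omega
    | cons h' => omega
  | cons h ih => cases h2 with
    | rel h' => omega
    | cons h' => exact ih h'

lemma genlt_asymm {u v : List ℕ} (h1 : GenLtN u v) (h2 : GenLtN v u) : False := by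
  rcases h1 with h1 | ⟨e1, l1⟩ <;> rcases h2 with h2 | ⟨e2, l2⟩
  · omega
  · omega
  · omega
  · exact lex_asymm l1 l2

lemma lex_snoc_same {b c : ℕ} (u : List ℕ) (h : b < c) :
    List.Lex (·<·) (u ++ [b]) (u ++ [c]) := by
  induction u with
  | nil => exact List.Lex.rel h
  | cons a t ih => exact List.Lex.cons ih

lemma lex_snoc {u v : List ℕ} {b c : ℕ} (hl : u.length = v.length)
    (h : List.Lex (·<·) u v) : List.Lex (·<·) (u ++ [b]) (v ++ [c]) := by
  induction h with
  | nil => simp at hl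
  | rel h => exact List.Lex.rel h
  | cons h ih => exact List.Lex.cons (ih (by simpa using hl))

end helpers

theorem oneDim {σ : Type*} (ν : σ → List σ) (a : σ) (x : ℕ → σ) (pos : ℕ → ℕ)
    (rep : ℕ → List ℕ) (val : List ℕ → ℕ)
    (hx0 : x 0 = a)
    (hlen : ∀ k, 1 ≤ (ν (x k)).length)
    (hpos0 : pos 0 = 0)
    (hposS : ∀ k, pos (k + 1) = pos k + (ν (x k)).length)
    (hfix : ∀ k i, i < (ν (x k)).length → (ν (x k))[i]? = some (x (pos k + i)))
    (hrep : IsANSEnum (directive ν a) rep)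
    (hval : ∀ n, val (rep n) = n) :
    ∀ m u b, rep m = u ++ [b] →
      b < (ν (x (val u))).length ∧ m = pos (val u) + b := by
  obtain ⟨hmem, hsurj, hmono⟩ := hrep
  have hinj : ∀ {i j}, rep i = rep j → i = j := by
    intro i j h
    have := hval i; rw [h, hval j] at this; omega
  have hnilL : ([] : List ℕ) ∈ directive ν a := ⟨rfl, by simp⟩
  have hrep0 : rep 0 = [] := by
    obtain ⟨n, hn⟩ := hsurj [] hnilL
    rcases Nat.eq_zero_or_pos n with rfl | hp
    · exact hn
    · exfalso
      have h := hmono 0 n hp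
      rw [hn] at h
      rcases h with h | ⟨_, l⟩
      · simp at h
      · exact List.not_lex_nil l
  have hrepne : ∀ m, m ≠ 0 → rep m ≠ [] := by
    intro m hm h
    exact hm (hinj (h.trans hrep0.symm))
  have hlenmono : ∀ {i j}, i < j → (rep i).length ≤ (rep j).length := by
    intro i j h
    rcases hmono i j h with h | ⟨h, _⟩ <;> omega
  have hpref : ∀ u (b : ℕ), u ++ [b] ∈ directive ν a → u ∈ directive ν a := by
    rintro u b ⟨h1, h2⟩
    rw [deltaW_snoc] at h1
    constructor
    · cases h : deltaW ν a u
      · rw [h] at h1; simp at h1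
      · simp
    · cases u with
      | nil => simp
      | cons h t => simpa using h2
  have hlen0 : 2 ≤ (ν (x 0)).length := by
    by_contra h
    push_neg at h
    obtain ⟨h1, h2⟩ := hmem 1
    have hne := hrepne 1 one_ne_zero
    cases hr : rep 1 with
    | nil => exact hne hr
    | cons d t =>
      rw [hr, deltaW_cons] at h1
      rw [hr] at h2
      have hd : d < (ν a).length := by
        by_contra hd
        push_neg at hd
        rw [List.getElem?_eq_none hd] at h1
        simp at h1
      rw [← hx0] at hd
      have : d = 0 := by omega
      simp [this] at h2
  have hposge : ∀ k, k ≤ pos k := by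
    intro k
    induction k with
    | zero => omega
    | succ k ih => have := hposS k; have := hlen k; omega
  have hposgt : ∀ k, 1 ≤ k → k + 1 ≤ pos k := by
    intro k hk
    induction k with
    | zero => omega
    | succ k ih =>
      rcases Nat.eq_zero_or_pos k with rfl | hp
      · have h1 := hposS 0
        rw [hpos0] at h1
        omega
      · have := hposS k; have := hlen k; have := ih hp; omega
  have hposmono : ∀ {i j}, i ≤ j → pos i ≤ pos j := by
    intro i j h
    induction j with
    | zero =>
      have : i = 0 := by omega
      rw [this]
    | succ j ih =>
      rcases Nat.lt_or_ge i (j + 1) with h' | h'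
      · have h1 := ih (by omega)
        have := hposS j; have := hlen j; omega
      · have : i = j + 1 := by omega
        rw [this]
  have hklt : ∀ k b m, b < (ν (x k)).length → pos k + b = m → 1 ≤ m → k < m := by
    intro k b m hb hm h1
    by_contra h
    push_neg at h
    have hk1 : 1 ≤ k := by omega
    have := hposgt k hk1
    omega
  have hdec : ∀ m, ∃ k b, b < (ν (x k)).length ∧ pos k + b = m := by
    intro m
    induction m with
    | zero => exact ⟨0, 0, by have := hlen 0; omega, by omega⟩
    | succ m ih =>
      obtain ⟨k, b, hb, hm⟩ := ih
      rcases Nat.lt_or_ge (b + 1) ((ν (x k)).length) with h | h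
      · exact ⟨k, b + 1, h, by omega⟩
      · refine ⟨k + 1, 0, by have := hlen (k + 1); omega, ?_⟩
        have := hposS k; omega
  have huniq : ∀ k b j d, b < (ν (x k)).length → d < (ν (x j)).length →
      pos k + b = pos j + d → k = j ∧ b = d := by
    intro k b j d hb hd he
    rcases Nat.lt_trichotomy k j with h | h | h
    · have h1 : pos (k + 1) ≤ pos j := hposmono h
      have := hposS k; omega
    · subst h; omega
    · have h1 : pos (j + 1) ≤ pos k := hposmono h
      have := hposS j; omega
  have hpairlt : ∀ k b j d, b < (ν (x k)).length → d < (ν (x j)).length →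
      pos k + b < pos j + d → GenLtN (rep k ++ [b]) (rep j ++ [d]) := by
    intro k b j d hb hd hlt
    have hkj : k < j ∨ (k = j ∧ b < d) := by
      rcases Nat.lt_trichotomy k j with h | h | h
      · exact Or.inl h
      · subst h; omega
      · exfalso
        have h1 : pos (j + 1) ≤ pos k := hposmono h
        have := hposS j; omega
    rcases hkj with h | ⟨rfl, h⟩
    · rcases hmono k j h with h' | ⟨h', l⟩
      · left; simp; omega
      · right
        exact ⟨by simp [h'], lex_snoc h' l⟩
    · exact Or.inr ⟨by simp, lex_snoc_same _ h⟩
  -- MAIN INDUCTION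
  have main : ∀ m, deltaW ν a (rep m) = some (x m) ∧
      (∀ k b, b < (ν (x k)).length → pos k + b = m → ¬(k = 0 ∧ b = 0) →
        rep m = rep k ++ [b]) := by
    intro m
    induction m using Nat.strong_induction_on with
    | _ m IH =>
    rcases Nat.eq_zero_or_pos m with rfl | hm1
    · constructor
      · rw [hrep0, hx0]; rfl
      · intro k b hb he hne
        have := hposge k
        have hk0 : k = 0 := by omega
        subst hk0
        rw [hpos0] at he
        exact absurd ⟨rfl, by omega⟩ hne
    · have hne := hrepne m (by omega)
      obtain ⟨u, d, hud⟩ : ∃ u d, rep m = u ++ [d] := by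
        rcases List.eq_nil_or_concat (rep m) with h | ⟨u, d, h⟩
        · exact absurd h hne
        · exact ⟨u, d, by simpa using h⟩
      have huL : u ∈ directive ν a := hpref u d (hud ▸ hmem m)
      obtain ⟨j, hj⟩ := hsurj u huL
      have hjm : j < m := by
        by_contra h
        push_neg at h
        have h2 : (rep m).length ≤ (rep j).length := by
          rcases Nat.lt_or_ge m j with h' | h'
          · exact hlenmono h'
          · have : j = m := by omega
            subst this; omega
        rw [hud, hj] at h2
        simp at h2
      have hAj : deltaW ν a (rep j) = some (x j) := (IH j hjm).1
      have hdlt : d < (ν (x j)).length := by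
        have h1 := (hmem m).1
        rw [hud, deltaW_snoc, ← hj, hAj] at h1
        by_contra h
        push_neg at h
        rw [Option.bind_some, List.getElem?_eq_none h] at h1
        simp at h1
      have hjd0 : ¬(j = 0 ∧ d = 0) := by
        rintro ⟨rfl, rfl⟩
        have h2 := (hmem m).2
        rw [hud, ← hj, hrep0] at h2
        simp at h2
      have hm2 : pos j + d = m := by
        have hm₂1 : 1 ≤ pos j + d := by
          rcases Nat.eq_zero_or_pos j with rfl | hp
          · rw [hpos0]
            rcases Nat.eq_zero_or_pos d with rfl | hd
            · exact absurd ⟨rfl, rfl⟩ hjd0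
            · omega
          · have := hposgt j hp; omega
        rcases Nat.lt_trichotomy (pos j + d) m with h | h | h
        · exfalso
          have h2 := (IH _ h).2 j d hdlt rfl hjd0
          have heq : rep (pos j + d) = rep m := by rw [h2, hud, hj]
          have := hinj heq
          omega
        · exact h
        · exfalso
          obtain ⟨k, b, hb, hkb⟩ := hdec m
          have hkb0 : ¬(k = 0 ∧ b = 0) := by
            rintro ⟨rfl, rfl⟩
            rw [hpos0] at hkb; omega
          have hklt' := hklt k b m hb hkb hm1
          have hAk : deltaW ν a (rep k) = some (x k) := (IH k hklt').1
          have hwL : rep k ++ [b] ∈ directive ν a := by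
            constructor
            · rw [deltaW_snoc, hAk]
              simp [hfix k b hb]
            · rcases Nat.eq_zero_or_pos k with rfl | hp
              · rw [hrep0]
                simp only [List.nil_append, List.head?_cons, ne_eq, Option.some.injEq]
                intro hc
                exact hkb0 ⟨rfl, hc⟩
              · have hne' := hrepne k (by omega)
                cases hc : rep k with
                | nil => exact absurd hc hne'
                | cons e t =>
                  have h3 := (hmem k).2
                  rw [hc] at h3
                  simpa using h3
          obtain ⟨N, hN⟩ := hsurj _ hwL
          rcases Nat.lt_trichotomy N m with h' | h' | h'
          · obtain ⟨k₂, b₂, hb₂, hkb₂⟩ := hdec N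
            have hN1 : 1 ≤ N := by
              rcases Nat.eq_zero_or_pos N with rfl | hp
              · exfalso
                rw [hrep0] at hN
                have := congrArg List.length hN
                simp at this
              · exact hp
            have hkb₂0 : ¬(k₂ = 0 ∧ b₂ = 0) := by
              rintro ⟨rfl, rfl⟩
              rw [hpos0] at hkb₂; omega
            have h2 := (IH N h').2 k₂ b₂ hb₂ hkb₂ hkb₂0
            rw [hN] at h2
            obtain ⟨hrk, hbd⟩ := snoc_inj h2
            have hkk : k = k₂ := hinj hrk
            subst hkk
            omega
          · subst h'
            rw [hud] at hN
            obtain ⟨hrk, hbd⟩ := snoc_inj hN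
            have hkj : k = j := hinj (by rw [← hrk, hj])
            subst hkj
            omega
          · have hg2 : GenLtN (rep m) (rep N) := hmono m N h'
            have hg3 : GenLtN (rep k ++ [b]) (rep j ++ [d]) :=
              hpairlt k b j d hb hdlt (by omega)
            rw [hN, hud, ← hj] at hg2
            exact genlt_asymm hg3 hg2
      constructor
      · rw [hud, deltaW_snoc, ← hj, hAj]
        simp [hfix j d hdlt, hm2]
      · intro k b hb hkb hne0
        obtain ⟨rfl, rfl⟩ := huniq k b j d hb hdlt (by omega)
        rw [hud, hj]
  -- conclusion
  intro m u b hub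
  have hm1 : 1 ≤ m := by
    rcases Nat.eq_zero_or_pos m with rfl | hp
    · exfalso
      rw [hrep0] at hub
      have := congrArg List.length hub
      simp at this
    · exact hp
  have huL : u ∈ directive ν a := hpref u b (hub ▸ hmem m)
  obtain ⟨j, hj⟩ := hsurj u huL
  have hvj : val u = j := by rw [← hj, hval]
  have hjm : j < m := by
    by_contra h
    push_neg at h
    have h2 : (rep m).length ≤ (rep j).length := by
      rcases Nat.lt_or_ge m j with h' | h'
      · exact hlenmono h'
      · have : j = m := by omega
        subst this; omega
    rw [hub, hj] at h2
    simp at h2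
  have hAj := (main j).1
  have hblt : b < (ν (x j)).length := by
    have h1 := (hmem m).1
    rw [hub, deltaW_snoc, ← hj, hAj] at h1
    by_contra h
    push_neg at h
    rw [Option.bind_some, List.getElem?_eq_none h] at h1
    simp at h1
  have hjb0 : ¬(j = 0 ∧ b = 0) := by
    rintro ⟨rfl, rfl⟩
    have h2 := (hmem m).2
    rw [hub, ← hj, hrep0] at h2
    simp at h2
  have h2 := (main (pos j + b)).2 j b hblt rfl hjb0
  have heq : rep (pos j + b) = rep m := by rw [h2, hub, hj]
  have := hinj heq
  rw [hvj]
  exact ⟨hblt, by omega⟩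

/-- equation `(eq:y)`. Let `y = μ^ω(a)` be shape-symmetric, let `L`
be the common directive language `L_{μ₁,a} = L_{μ₂,a}` of the morphisms derived from
the first row and the first column of `y`, and let `S` be the abstract numeration
system built on `L` (with `rep` and its inverse `val`). If `rep_S(m) = u·b` and
`rep_S(n) = v·c` with `b, c` digits, then `(μ(y(val_S(u), val_S(v))))(b,c) = y(m,n)`. -/
theorem stmt_12 {σ : Type*} (μ : σ → Picture σ) (a : σ) (y : ℕ × ℕ → σ)
    (hfp : IsFixedPoint2D μ a y) (hss : ShapeSymmetric μ y)
    (hcomm : directive (firstRow μ) a = directive (firstCol μ) a)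
    (rep : ℕ → List ℕ) (hrep : IsANSEnum (directive (firstRow μ) a) rep)
    (val : List ℕ → ℕ) (hval : ∀ n, val (rep n) = n) :
    ∀ m n u v (b c : ℕ), rep m = u ++ [b] → rep n = v ++ [c] →
      (μ (y (val u, val v))).entry b c = y (m, n) := by
  obtain ⟨hy0, hmua, hsz, hW, hH, col, row, hc0, hr0, hcS, hrS, hfix2⟩ := hfp
  have hrowLem := oneDim (firstRow μ) a (fun m => y (m, 0)) col rep val
    hy0
    (fun k => by simpa [firstRow] using (hsz k 0).1)
    hc0
    (fun k => by simpa [firstRow] using hcS k)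
    (fun k i hi => by
      simp only [firstRow, List.length_ofFn] at hi
      have h := hfix2 k 0 i 0 hi (hsz k 0).2
      rw [hr0] at h
      simp [firstRow, List.getElem?_ofFn, hi, ← h])
    hrep hval
  have hrep' : IsANSEnum (directive (firstCol μ) a) rep := hcomm ▸ hrep
  have hcolLem := oneDim (firstCol μ) a (fun n => y (0, n)) row rep val
    hy0
    (fun k => by simpa [firstCol] using (hsz 0 k).2)
    hr0
    (fun k => by simpa [firstCol] using hrS k)
    (fun k i hi => by
      simp only [firstCol, List.length_ofFn] at hi
      have h := hfix2 0 k 0 i (hsz 0 k).1 hi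
      rw [hc0] at h
      simp [firstCol, List.getElem?_ofFn, hi, ← h])
    hrep' hval
  intro m n u v b c hu hv
  obtain ⟨hb, hm⟩ := hrowLem m u b hu
  obtain ⟨hc, hn⟩ := hcolLem n v c hv
  simp only [firstRow, List.length_ofFn] at hb
  simp only [firstCol, List.length_ofFn] at hc
  have hb' : b < (μ (y (val u, val v))).width := by rw [hW (val u) (val v) 0]; exact hb
  have hc' : c < (μ (y (val u, val v))).height := by rw [hH (val u) 0 (val v)]; exact hc
  have h := hfix2 (val u) (val v) b c hb' hc'
  rw [← h, ← hm, ← hn]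
end

section
/- Let μ : Σ → B₂(Σ) be a 2-dimensional morphism prolongable on a with shape-symmetric fixed point y = μ^ω(a), let L be the common directive language of the unidimensional morphisms derived from the first row and first column of y, and let S be the abstract numeration system built on L with digits ordered 0 < 1 < ⋯ < r_μ−1 (r_μ being the maximal side length of the images μ(b)). Define the 2-dimensional DFA 𝒜_{μ,a} with alphabet {0,…,r_μ−1}², state set Σ, initial state a, all states final, and partial transitions δ_μ(b,(i,j)) = (μ(b))(i,j) for (i,j) within the shape of μ(b). Then for all m,n ≥ 0, y(m,n) = δ_μ(a, (rep_S(m), rep_S(n))⁰), where (u,v)⁰ pads the shorter of u,v on the left with the digit 0 so that both have equal length and reads the pair as a word over {0,…,r_μ−1}². -/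
/-- The 2-dimensional (partial) transition function of the DFA `𝒜_{μ,a}` associated
with a 2-dimensional morphism: `δ_μ(b,(i,j)) = (μ(b))(i,j)` when `(i,j)` lies within
the shape of `μ(b)`. -/
def delta2 {σ : Type*} (μ : σ → Picture σ) (b : σ) (p : ℕ × ℕ) : Option σ :=
  if p.1 < (μ b).width ∧ p.2 < (μ b).height then some ((μ b).entry p.1 p.2) else none

/-- `(u,v)⁰`: pad the shorter of `u, v` on the left with the digit `0` so that both
have equal length, and read the pair as a word over pairs of digits. -/
def padZero (u v : List ℕ) : List (ℕ × ℕ) :=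
  List.zip (List.replicate (max u.length v.length - u.length) 0 ++ u)
           (List.replicate (max u.length v.length - v.length) 0 ++ v)


namespace Stmt13

/-- value/evaluation of a digit word via the cumulative-length function `S`. -/
def val (S : ℕ → ℕ) (p : ℕ) (w : List ℕ) : ℕ := w.foldl (fun q d => S q + d) p

@[simp] lemma val_nil (S : ℕ → ℕ) (p : ℕ) : val S p [] = p := rfl
@[simp] lemma val_cons (S : ℕ → ℕ) (p d : ℕ) (w : List ℕ) :
    val S p (d :: w) = val S (S p + d) w := rfl
lemma val_append (S : ℕ → ℕ) (p : ℕ) (u v : List ℕ) :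
    val S p (u ++ v) = val S (val S p u) v := List.foldl_append ..

variable {σ : Type*}

@[simp] lemma deltaW_nil (ν : σ → List σ) (b : σ) : deltaW ν b [] = some b := rfl

lemma deltaW_cons (ν : σ → List σ) (b : σ) (d : ℕ) (w : List ℕ) :
    deltaW ν b (d :: w) = ((ν b)[d]?).bind (fun c => deltaW ν c w) := by
  simp [deltaW, List.foldlM_cons]

lemma deltaW_append (ν : σ → List σ) (b : σ) (u v : List ℕ) :
    deltaW ν b (u ++ v) = (deltaW ν b u).bind (fun c => deltaW ν c v) := by
  simp [deltaW, List.foldlM_append]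

/-- A unidimensional morphic system: morphism `nu`, fixed point `z`, cumulative
lengths `S`. -/
structure Sys (σ : Type*) where
  nu : σ → List σ
  z : ℕ → σ
  S : ℕ → ℕ
  hS0 : S 0 = 0
  hSs : ∀ k, S (k+1) = S k + (nu (z k)).length
  hlen : ∀ k, 1 ≤ (nu (z k)).length
  hfix : ∀ k i, i < (nu (z k)).length → (nu (z k))[i]? = some (z (S k + i))

namespace Sys

variable (E : Sys σ)

lemma Smono : StrictMono E.S :=
  strictMono_nat_of_lt_succ fun k => by have := E.hlen k; rw [E.hSs]; omega

lemma le_S (p : ℕ) : p ≤ E.S p := E.Smono.le_apply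

lemma iterMono (n : ℕ) : Monotone (E.S^[n]) := E.Smono.monotone.iterate n

/-- decompose a successful one-step transition from `z p`. -/
lemma step {p d : ℕ} {c : σ} (h : (E.nu (E.z p))[d]? = some c) :
    d < (E.nu (E.z p)).length ∧ c = E.z (E.S p + d) := by
  obtain ⟨hd, -⟩ := List.getElem?_eq_some_iff.mp h
  refine ⟨hd, ?_⟩
  have := E.hfix p d hd
  rw [this] at h
  exact (Option.some.inj h).symm

lemma run (w : List ℕ) : ∀ p s, deltaW E.nu (E.z p) w = some s → s = E.z (val E.S p w) := by
  induction w with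
  | nil => intro p s h; simp at h; simp [← h]
  | cons d t ih =>
    intro p s h
    rw [deltaW_cons] at h
    obtain ⟨c, hc, h2⟩ := Option.bind_eq_some_iff.mp h
    obtain ⟨hd, rfl⟩ := E.step hc
    simpa using ih _ s h2

lemma range (w : List ℕ) : ∀ p, (deltaW E.nu (E.z p) w).isSome →
    E.S^[w.length] p ≤ val E.S p w ∧ val E.S p w < E.S^[w.length] (p+1) := by
  induction w with
  | nil => intro p _; simp
  | cons d t ih =>
    intro p h
    obtain ⟨s, hs⟩ := Option.isSome_iff_exists.mp h
    rw [deltaW_cons] at hs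
    obtain ⟨c, hc, h2⟩ := Option.bind_eq_some_iff.mp hs
    obtain ⟨hd, rfl⟩ := E.step hc
    have ih' := ih (E.S p + d) (by rw [h2]; rfl)
    have h1 : E.S p + d + 1 ≤ E.S (p+1) := by have := E.hSs p; omega
    constructor
    · calc E.S^[(d::t).length] p = E.S^[t.length] (E.S p) := by
            rw [List.length_cons, Function.iterate_succ_apply]
        _ ≤ E.S^[t.length] (E.S p + d) := E.iterMono _ (Nat.le_add_right _ _)
        _ ≤ val E.S (E.S p + d) t := ih'.1
    · calc val E.S p (d::t) = val E.S (E.S p + d) t := rfl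
        _ < E.S^[t.length] (E.S p + d + 1) := ih'.2
        _ ≤ E.S^[t.length] (E.S (p+1)) := E.iterMono _ h1
        _ = E.S^[(d::t).length] (p+1) := by
            rw [List.length_cons, Function.iterate_succ_apply]

lemma lex_lt {u v : List ℕ} (h : List.Lex (· < ·) u v) :
    u.length = v.length → ∀ p, (deltaW E.nu (E.z p) u).isSome →
    (deltaW E.nu (E.z p) v).isSome → val E.S p u < val E.S p v := by
  induction h with
  | nil => intro hlen; simp at hlen
  | @cons a l₁ l₂ h ih =>
    intro hlen p hu hv
    obtain ⟨s, hs⟩ := Option.isSome_iff_exists.mp hu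
    rw [deltaW_cons] at hs
    obtain ⟨c, hc, h2⟩ := Option.bind_eq_some_iff.mp hs
    obtain ⟨hd, rfl⟩ := E.step hc
    obtain ⟨s', hs'⟩ := Option.isSome_iff_exists.mp hv
    rw [deltaW_cons] at hs'
    obtain ⟨c', hc', h2'⟩ := Option.bind_eq_some_iff.mp hs'
    obtain ⟨hd', rfl⟩ := E.step hc'
    simp only [val_cons]
    exact ih (by simpa using hlen) _ (by rw [h2]; rfl) (by rw [h2']; rfl)
  | @rel a l₁ b l₂ hab =>
    intro hlen p hu hv
    obtain ⟨s, hs⟩ := Option.isSome_iff_exists.mp hu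
    rw [deltaW_cons] at hs
    obtain ⟨c, hc, h2⟩ := Option.bind_eq_some_iff.mp hs
    obtain ⟨hd, rfl⟩ := E.step hc
    obtain ⟨s', hs'⟩ := Option.isSome_iff_exists.mp hv
    rw [deltaW_cons] at hs'
    obtain ⟨c', hc', h2'⟩ := Option.bind_eq_some_iff.mp hs'
    obtain ⟨hd', rfl⟩ := E.step hc'
    have hl : l₁.length = l₂.length := by simpa using hlen
    have r1 := (E.range l₁ (E.S p + a) (by rw [h2]; rfl)).2
    have r2 := (E.range l₂ (E.S p + b) (by rw [h2']; rfl)).1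
    simp only [val_cons]
    calc val E.S (E.S p + a) l₁ < E.S^[l₁.length] (E.S p + a + 1) := r1
      _ ≤ E.S^[l₂.length] (E.S p + b) := by rw [hl]; exact E.iterMono _ (by omega)
      _ ≤ val E.S (E.S p + b) l₂ := r2

lemma one_le_S_one : 1 ≤ E.S 1 := by
  have := E.hlen 0; rw [E.hSs, E.hS0]; omega

lemma exp_mono {k l : ℕ} (h : k ≤ l) : E.S^[k] 1 ≤ E.S^[l] 1 := by
  have : Monotone (fun k => E.S^[k] 1) := monotone_nat_of_le_succ (fun k => by
    rw [Function.iterate_succ_apply]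
    exact E.iterMono k E.one_le_S_one)
  exact this h

lemma gen_lt {u v : List ℕ}
    (hu : (deltaW E.nu (E.z 0) u).isSome) (hv : (deltaW E.nu (E.z 0) v).isSome)
    (hv0 : v.head? ≠ some 0) (h : GenLtN u v) :
    val E.S 0 u < val E.S 0 v := by
  rcases h with hlt | ⟨heq, hlex⟩
  · rcases v with _ | ⟨e, v'⟩
    · simp at hlt
    · have he : 1 ≤ e := by
        rcases Nat.eq_zero_or_pos e with rfl | h; · simp at hv0
        · exact h
      obtain ⟨s, hs⟩ := Option.isSome_iff_exists.mp hv
      rw [deltaW_cons] at hs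
      obtain ⟨c, hc, h2⟩ := Option.bind_eq_some_iff.mp hs
      obtain ⟨hd, rfl⟩ := E.step hc
      have hupper := (E.range u 0 hu).2
      have hlower := (E.range v' (E.S 0 + e) (by rw [h2]; rfl)).1
      have hle : u.length ≤ v'.length := by simp at hlt; omega
      calc val E.S 0 u < E.S^[u.length] 1 := hupper
        _ ≤ E.S^[v'.length] 1 := E.exp_mono hle
        _ ≤ E.S^[v'.length] (E.S 0 + e) := E.iterMono _ (by rw [E.hS0]; omega)
        _ ≤ val E.S (E.S 0 + e) v' := hlower
        _ = val E.S 0 (e :: v') := rfl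
  · exact E.lex_lt hlex heq 0 hu hv

lemma lt_S (h2 : 2 ≤ (E.nu (E.z 0)).length) : ∀ p, 1 ≤ p → p < E.S p := by
  intro p hp
  induction p with
  | zero => omega
  | succ p ih =>
    rcases Nat.eq_zero_or_pos p with rfl | hp1
    · rw [E.hSs, E.hS0]; omega
    · have := ih hp1; have := E.hlen p; rw [E.hSs]; omega

lemma surj (h2 : 2 ≤ (E.nu (E.z 0)).length) (N : ℕ) :
    ∃ w, (deltaW E.nu (E.z 0) w).isSome ∧ w.head? ≠ some 0 ∧ val E.S 0 w = N := by
  induction N using Nat.strong_induction_on with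
  | _ N ih =>
    rcases Nat.eq_zero_or_pos N with rfl | hN
    · exact ⟨[], by simp, by simp, rfl⟩
    · set p := Nat.findGreatest (fun q => E.S q ≤ N) N with hp
      have hple : E.S p ≤ N :=
        Nat.findGreatest_spec (P := fun q => E.S q ≤ N) (m := 0) (Nat.zero_le N)
          (by show E.S 0 ≤ N; rw [E.hS0]; omega)
      have hnext : N < E.S (p+1) := by
        by_contra hcon; push_neg at hcon
        have h1 : p + 1 ≤ N := le_trans (E.le_S (p+1)) hcon
        exact Nat.findGreatest_is_greatest (Nat.lt_succ_self p) h1 hcon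
      have hplt : p < N := by
        rcases Nat.eq_zero_or_pos p with h0 | hp1
        · omega
        · have := E.lt_S h2 p hp1; omega
      obtain ⟨w', hw'some, hw'head, hw'val⟩ := ih p hplt
      have hd : N - E.S p < (E.nu (E.z p)).length := by have := E.hSs p; omega
      refine ⟨w' ++ [N - E.S p], ?_, ?_, ?_⟩
      · obtain ⟨s, hs⟩ := Option.isSome_iff_exists.mp hw'some
        have hsz : s = E.z p := by have := E.run w' 0 s hs; rw [this, hw'val]
        rw [deltaW_append, hs, hsz]
        simp [deltaW_cons, E.hfix p _ hd]
      · rcases w' with _ | ⟨c, t⟩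
        · have hp0 : p = 0 := by simpa using hw'val.symm
          have hs0 : E.S p = 0 := by rw [hp0, E.hS0]
          simp only [List.nil_append, List.head?_cons, ne_eq, Option.some.injEq]
          omega
        · simpa using hw'head
      · rw [val_append, hw'val]; simp; omega

lemma nat_strictmono_le {f : ℕ → ℕ} (h : StrictMono f) : ∀ n, n ≤ f n := by
  intro n
  induction n with
  | zero => omega
  | succ n ih => exact Nat.succ_le_of_lt (lt_of_le_of_lt ih (h (Nat.lt_succ_self n)))

lemma main1d (rep : ℕ → List ℕ)
    (hrep : IsANSEnum (directive E.nu (E.z 0)) rep) (n : ℕ) :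
    val E.S 0 (rep n) = n ∧ deltaW E.nu (E.z 0) (rep n) = some (E.z n) := by
  have h2 : 2 ≤ (E.nu (E.z 0)).length := by
    by_contra h; push_neg at h
    have h1 : (E.nu (E.z 0)).length = 1 := le_antisymm (by omega) (E.hlen 0)
    have hnil : ∀ w, w ∈ directive E.nu (E.z 0) → w = [] := by
      intro w hw
      rcases w with _ | ⟨d, t⟩
      · rfl
      · exfalso
        obtain ⟨hsome, hhead⟩ := hw
        rw [deltaW_cons] at hsome
        have hd0 : d ≠ 0 := by simpa using hhead
        have : (E.nu (E.z 0))[d]? = none := List.getElem?_eq_none (by omega)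
        rw [this] at hsome; simp at hsome
    have e0 := hnil (rep 0) (hrep.1 0)
    have e1 := hnil (rep 1) (hrep.1 1)
    have hg := hrep.2.2 0 1 one_pos
    rw [e0, e1] at hg
    rcases hg with h | ⟨-, h⟩
    · simp at h
    · cases h
  have hmono : StrictMono (fun n => val E.S 0 (rep n)) := by
    intro m n hmn
    exact E.gen_lt (hrep.1 m).1 (hrep.1 n).1 (hrep.1 n).2 (hrep.2.2 m n hmn)
  have hsurj : ∀ N, ∃ n, val E.S 0 (rep n) = N := by
    intro N
    obtain ⟨w, hw1, hw2, hw3⟩ := E.surj h2 N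
    obtain ⟨n, hn⟩ := hrep.2.1 w ⟨hw1, hw2⟩
    exact ⟨n, by rw [hn, hw3]⟩
  have hid : ∀ n, val E.S 0 (rep n) = n := by
    intro n
    induction n using Nat.strong_induction_on with
    | _ n ih =>
      obtain ⟨m, hm⟩ := hsurj n
      rcases lt_trichotomy m n with h | h | h
      · rw [ih m h] at hm; omega
      · exact h ▸ hm
      · have := nat_strictmono_le hmono m; omega
  refine ⟨hid n, ?_⟩
  obtain ⟨s, hs⟩ := Option.isSome_iff_exists.mp (hrep.1 n).1
  have := E.run (rep n) 0 s hs
  rw [hs, this, hid n]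

end Sys
end Stmt13

namespace Stmt13
variable {σ : Type*}

lemma firstRow_len (μ : σ → Picture σ) (b : σ) :
    (firstRow μ b).length = (μ b).width := by simp [firstRow]

lemma firstCol_len (μ : σ → Picture σ) (b : σ) :
    (firstCol μ b).length = (μ b).height := by simp [firstCol]

lemma firstRow_get (μ : σ → Picture σ) (b : σ) (i : ℕ) (h : i < (μ b).width) :
    (firstRow μ b)[i]? = some ((μ b).entry i 0) := by
  simp [firstRow, List.getElem?_ofFn, List.ofFnNthVal, h]

lemma firstCol_get (μ : σ → Picture σ) (b : σ) (j : ℕ) (h : j < (μ b).height) :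
    (firstCol μ b)[j]? = some ((μ b).entry 0 j) := by
  simp [firstCol, List.getElem?_ofFn, List.ofFnNthVal, h]

lemma deltaW_zeros (ν : σ → List σ) (a : σ) (ha : (ν a)[0]? = some a) (k : ℕ) (u : List ℕ) :
    deltaW ν a (List.replicate k 0 ++ u) = deltaW ν a u := by
  induction k with
  | zero => simp
  | succ k ih =>
    rw [List.replicate_succ, List.cons_append, deltaW_cons, ha, Option.bind_some]
    exact ih

lemma val_zeros (S : ℕ → ℕ) (hS0 : S 0 = 0) (k : ℕ) (u : List ℕ) :
    val S 0 (List.replicate k 0 ++ u) = val S 0 u := by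
  induction k with
  | zero => simp
  | succ k ih =>
    rw [List.replicate_succ, List.cons_append]
    show val S (S 0 + 0) _ = _
    rw [hS0]
    exact ih

lemma padZero_fst (u v : List ℕ) :
    (padZero u v).map Prod.fst
      = List.replicate (max u.length v.length - u.length) 0 ++ u := by
  apply List.map_fst_zip
  simp

lemma padZero_snd (u v : List ℕ) :
    (padZero u v).map Prod.snd
      = List.replicate (max u.length v.length - v.length) 0 ++ v := by
  apply List.map_snd_zip
  simp

end Stmt13

theorem stmt_13' {σ : Type*} (μ : σ → Picture σ) (a : σ) (y : ℕ × ℕ → σ)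
    (hfp : IsFixedPoint2D μ a y) (_hss : ShapeSymmetric μ y)
    (hcomm : directive (firstRow μ) a = directive (firstCol μ) a)
    (rep : ℕ → List ℕ) (hrep : IsANSEnum (directive (firstRow μ) a) rep) :
    ∀ m n, List.foldlM (delta2 μ) a (padZero (rep m) (rep n)) = some (y (m, n)) := by
  open Stmt13 in
  obtain ⟨hy0, hμa, hpos, hW, hH, col, row, hc0, hr0, hcs, hrs, hmain⟩ := hfp
  -- the row system
  set ER : Stmt13.Sys σ :=
    { nu := firstRow μ
      z := fun m => y (m, 0)
      S := col
      hS0 := hc0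
      hSs := fun k => by rw [hcs, Stmt13.firstRow_len]
      hlen := fun k => by rw [Stmt13.firstRow_len]; exact (hpos k 0).1
      hfix := fun k i hi => by
        rw [Stmt13.firstRow_len] at hi
        rw [Stmt13.firstRow_get μ _ i hi]
        have := hmain k 0 i 0 hi (hpos k 0).2
        rw [hr0] at this
        simp [← this] } with hER
  set EC : Stmt13.Sys σ :=
    { nu := firstCol μ
      z := fun n => y (0, n)
      S := row
      hS0 := hr0
      hSs := fun k => by rw [hrs, Stmt13.firstCol_len]
      hlen := fun k => by rw [Stmt13.firstCol_len]; exact (hpos 0 k).2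
      hfix := fun k j hj => by
        rw [Stmt13.firstCol_len] at hj
        rw [Stmt13.firstCol_get μ _ j hj]
        have := hmain 0 k 0 j (hpos 0 k).1 hj
        rw [hc0] at this
        simp [← this] } with hEC
  have hza : y (0, 0) = a := hy0
  -- 2D folding lemma
  have fold2 : ∀ (uv : List (ℕ × ℕ)) (p q : ℕ),
      (deltaW (firstRow μ) (y (p, 0)) (uv.map Prod.fst)).isSome →
      (deltaW (firstCol μ) (y (0, q)) (uv.map Prod.snd)).isSome →
      List.foldlM (delta2 μ) (y (p, q)) uv =
        some (y (Stmt13.val col p (uv.map Prod.fst), Stmt13.val row q (uv.map Prod.snd))) := by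
    intro uv
    induction uv with
    | nil => intro p q _ _; simp [Stmt13.val]
    | cons ij t ih =>
      intro p q hu hv
      obtain ⟨i, j⟩ := ij
      obtain ⟨s, hs⟩ := Option.isSome_iff_exists.mp hu
      rw [List.map_cons, Stmt13.deltaW_cons] at hs
      obtain ⟨c, hc, h2⟩ := Option.bind_eq_some_iff.mp hs
      have hstep := ER.step (p := p) (d := i) (c := c) hc
      obtain ⟨hi, rfl⟩ := hstep
      rw [Stmt13.firstRow_len] at hi
      obtain ⟨s', hs'⟩ := Option.isSome_iff_exists.mp hv
      rw [List.map_cons, Stmt13.deltaW_cons] at hs'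
      obtain ⟨c', hc', h2'⟩ := Option.bind_eq_some_iff.mp hs'
      have hstep' := EC.step (p := q) (d := j) (c := c') hc'
      obtain ⟨hj, rfl⟩ := hstep'
      rw [Stmt13.firstCol_len] at hj
      have hiw : i < (μ (y (p, q))).width := by rw [hW p q 0]; exact hi
      have hjh : j < (μ (y (p, q))).height := by rw [hH p 0 q]; exact hj
      have hone : delta2 μ (y (p, q)) (i, j) = some (y (col p + i, row q + j)) := by
        rw [delta2, if_pos ⟨hiw, hjh⟩, hmain p q i j hiw hjh]
      rw [List.foldlM_cons, hone]
      show List.foldlM (delta2 μ) (y (col p + i, row q + j)) t = _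
      have := ih (col p + i) (row q + j) (by rw [h2]; rfl) (by rw [h2']; rfl)
      rw [this]
      rfl
  intro m n
  -- 1D results
  have hrepR : IsANSEnum (directive (firstRow μ) (ER.z 0)) rep := by
    show IsANSEnum (directive (firstRow μ) (y (0,0))) rep
    rw [hza]; exact hrep
  have hrepC : IsANSEnum (directive (firstCol μ) (EC.z 0)) rep := by
    show IsANSEnum (directive (firstCol μ) (y (0,0))) rep
    rw [hza, ← hcomm]; exact hrep
  obtain ⟨hvalm, hrunm⟩ := ER.main1d rep hrepR m
  obtain ⟨hvaln, hrunn⟩ := EC.main1d rep hrepC n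
  -- the heads of the morphism images of a
  have hrow0 : (firstRow μ a)[0]? = some a := by
    rw [Stmt13.firstRow_get μ a 0 (by rw [← hza]; exact (hpos 0 0).1), hμa]
  have hcol0 : (firstCol μ a)[0]? = some a := by
    rw [Stmt13.firstCol_get μ a 0 (by rw [← hza]; exact (hpos 0 0).2), hμa]
  have hfst := Stmt13.padZero_fst (rep m) (rep n)
  have hsnd := Stmt13.padZero_snd (rep m) (rep n)
  have hrow0' : (firstRow μ (y (0, 0)))[0]? = some (y (0, 0)) := by rw [hza]; exact hrow0
  have hcol0' : (firstCol μ (y (0, 0)))[0]? = some (y (0, 0)) := by rw [hza]; exact hcol0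
  have hu : (deltaW (firstRow μ) (y (0, 0)) ((padZero (rep m) (rep n)).map Prod.fst)).isSome := by
    rw [hfst, Stmt13.deltaW_zeros _ _ hrow0']
    show (deltaW ER.nu (ER.z 0) (rep m)).isSome
    rw [hrunm]; rfl
  have hv : (deltaW (firstCol μ) (y (0, 0)) ((padZero (rep m) (rep n)).map Prod.snd)).isSome := by
    rw [hsnd, Stmt13.deltaW_zeros _ _ hcol0']
    show (deltaW EC.nu (EC.z 0) (rep n)).isSome
    rw [hrunn]; rfl
  have hfold := fold2 (padZero (rep m) (rep n)) 0 0 hu hv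
  rw [hza] at hfold
  rw [hfold, hfst, hsnd, Stmt13.val_zeros col hc0, Stmt13.val_zeros row hr0]
  have hm' : Stmt13.val col 0 (rep m) = m := hvalm
  have hn' : Stmt13.val row 0 (rep n) = n := hvaln
  rw [hm', hn']

/-- Let `y = μ^ω(a)` be shape-symmetric, `L` the common directive
language of the morphisms derived from the first row and first column of `y`, and `S`
the abstract numeration system built on `L`.  Then for all `m, n ≥ 0`,
`y(m,n) = δ_μ(a, (rep_S(m), rep_S(n))⁰)`. -/
theorem stmt_13 {σ : Type*} (μ : σ → Picture σ) (a : σ) (y : ℕ × ℕ → σ)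
    (hfp : IsFixedPoint2D μ a y) (hss : ShapeSymmetric μ y)
    (hcomm : directive (firstRow μ) a = directive (firstCol μ) a)
    (rep : ℕ → List ℕ) (hrep : IsANSEnum (directive (firstRow μ) a) rep) :
    ∀ m n, List.foldlM (delta2 μ) a (padZero (rep m) (rep n)) = some (y (m, n)) :=
  stmt_13' μ a y hfp hss hcomm rep hrep
end
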